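/- RTK GloRo Net correctness (Theorem 1): let f : ℝ^n → ℝ^m with pairwise distinct logits everywhere, K_{ji} a Lipschitz constant of f_j - f_i for each pair, and define m^k_j(x) = f_j(x) - max_{i ∉ F^k(x)} (f_i(x) + ε K_{ji}), m^k(x) = min_{j ∈ F^k(x)} m^k_j(x), and m(x) = max_{k ≤ K} m^k(x). If m(x) > 0, then f is RT-K ε-locally-robust at x: there exists k ≤ K such that F^k(x') = F^k(x) for all x' with ‖x - x'‖ ≤ ε. -/

import Mathlib

/-- `Fk f k x` is the set of classes achieving the `k` highest logit values of
`f` at `x`. -/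
noncomputable def Fk {E : Type*} {m : ℕ} (f : E → Fin m → ℝ) (k : ℕ) (x : E) : Finset (Fin m) :=
  Finset.univ.filter fun j => (Finset.univ.filter fun i => f x j ≤ f x i).card ≤ k

namespace RTKAux

lemma rank_lt {m : ℕ} (g : Fin m → ℝ) {i j : Fin m} (hij : g i < g j) :
    (Finset.univ.filter fun i' => g j ≤ g i').card <
      (Finset.univ.filter fun i' => g i ≤ g i').card := by
  apply Finset.card_lt_card
  rw [Finset.ssubset_iff_of_subset]
  · exact ⟨i, by simp, by simp [not_le.mpr hij]⟩
  · intro a ha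
    simp only [Finset.mem_filter, Finset.mem_univ, true_and] at ha ⊢
    linarith

lemma rank_inj {m : ℕ} (g : Fin m → ℝ) (hg : Function.Injective g) :
    Function.Injective (fun j => (Finset.univ.filter fun i' => g j ≤ g i').card) := by
  intro a b hab
  by_contra hne
  have hgne : g a ≠ g b := fun h => hne (hg h)
  simp only at hab
  rcases hgne.lt_or_gt with h | h
  · have := rank_lt g h; omega
  · have := rank_lt g h; omega

lemma card_Fk_le {E : Type*} {m : ℕ} (f : E → Fin m → ℝ) (k : ℕ) (z : E) (hk : 1 ≤ k)
    (hg : Function.Injective (f z)) : (Fk f k z).card ≤ k := by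
  have h := Finset.card_le_card_of_injOn
    (f := fun j => (Finset.univ.filter fun i' => f z j ≤ f z i').card)
    (s := Fk f k z) (t := Finset.Icc 1 k) ?_ ?_
  · simpa using h
  · intro j hj
    simp only [Fk, Finset.mem_coe, Finset.mem_filter, Finset.mem_univ, true_and] at hj
    simp only [Finset.mem_coe, Finset.mem_Icc]
    refine ⟨?_, hj⟩
    have : j ∈ Finset.univ.filter fun i' => f z j ≤ f z i' := by simp
    exact Finset.card_pos.mpr ⟨j, this⟩
  · intro a _ b _ hab
    exact rank_inj (f z) hg hab

lemma k_le_card_Fk {E : Type*} {m : ℕ} (f : E → Fin m → ℝ) (k : ℕ) (z : E)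
    (hg : Function.Injective (f z)) (hne : ∃ i, i ∉ Fk f k z) : k ≤ (Fk f k z).card := by
  obtain ⟨i, hi⟩ := hne
  have hCne : (Finset.univ \ Fk f k z).Nonempty := ⟨i, by simp [hi]⟩
  obtain ⟨i₀, hi₀mem, hi₀max⟩ := Finset.exists_max_image (Finset.univ \ Fk f k z) (f z) hCne
  have hi₀ : i₀ ∉ Fk f k z := by simpa using hi₀mem
  have hsub : (Finset.univ.filter fun i' => f z i₀ ≤ f z i') ⊆ insert i₀ (Fk f k z) := by
    intro a ha
    simp only [Finset.mem_filter, Finset.mem_univ, true_and] at ha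
    by_cases haS : a ∈ Fk f k z
    · exact Finset.mem_insert_of_mem haS
    · have hle : f z a ≤ f z i₀ := hi₀max a (by simp [haS])
      have : f z a = f z i₀ := le_antisymm hle ha
      have : a = i₀ := hg this
      simp [this]
  have hcard : (Finset.univ.filter fun i' => f z i₀ ≤ f z i').card ≤ (Fk f k z).card + 1 := by
    calc (Finset.univ.filter fun i' => f z i₀ ≤ f z i').card
        ≤ (insert i₀ (Fk f k z)).card := Finset.card_le_card hsub
      _ ≤ (Fk f k z).card + 1 := Finset.card_insert_le _ _
  have hgt : k < (Finset.univ.filter fun i' => f z i₀ ≤ f z i').card := by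
    by_contra h
    exact hi₀ (by simp only [Fk, Finset.mem_filter, Finset.mem_univ, true_and]; omega)
  omega

end RTKAux

/-- RTK GloRo Net correctness (Theorem 1): with pairwise distinct logits
everywhere and `K j i` a Lipschitz constant of `f_j - f_i`, if the margin
`m(x) = max_{k ≤ K} min_{j ∈ Fᵏ(x)} (f_j(x) - max_{i ∉ Fᵏ(x)} (f_i(x) + ε·K j i))`
is positive — i.e., there is some `k` with `1 ≤ k ≤ K` such that
`0 < f_j(x) - (f_i(x) + ε·K j i)` for all `j ∈ Fᵏ(x)` and `i ∉ Fᵏ(x)` — then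
`f` is RT-K `ε`-locally-robust at `x`: there exists `k ≤ K` such that
`Fᵏ(x') = Fᵏ(x)` for all `x'` with `‖x - x'‖ ≤ ε`. -/
theorem rtk_gloro_correct {n m : ℕ} (f : EuclideanSpace ℝ (Fin n) → Fin m → ℝ)
    (x : EuclideanSpace ℝ (Fin n)) (K : ℕ) (ε : ℝ) (Kc : Fin m → Fin m → ℝ)
    (hdist : ∀ z (i j : Fin m), i ≠ j → f z i ≠ f z j)
    (hK : 1 ≤ K) (hε : 0 ≤ ε) (hKc : ∀ j i, 0 ≤ Kc j i)
    (hLip : ∀ j i : Fin m,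
      ∀ a b, |(f a j - f a i) - (f b j - f b i)| ≤ Kc j i * ‖a - b‖)
    (hpos : ∃ k, 1 ≤ k ∧ k ≤ K ∧
      ∀ j ∈ Fk f k x, ∀ i ∉ Fk f k x, 0 < f x j - (f x i + ε * Kc j i)) :
    ∃ k, 1 ≤ k ∧ k ≤ K ∧ ∀ x', ‖x - x'‖ ≤ ε → Fk f k x = Fk f k x' := by
  obtain ⟨k, hk1, hkK, hm⟩ := hpos
  have hg : ∀ z, Function.Injective (f z) := by
    intro z a b h
    by_contra hne
    exact hdist z a b hne h
  refine ⟨k, hk1, hkK, fun x' hx' => ?_⟩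
  have hsep : ∀ j ∈ Fk f k x, ∀ i ∉ Fk f k x, f x' i < f x' j := by
    intro j hj i hi
    have h1 := hm j hj i hi
    have h2 := hLip j i x x'
    have h3 : Kc j i * ‖x - x'‖ ≤ ε * Kc j i := by
      rw [mul_comm]
      exact mul_le_mul_of_nonneg_right hx' (hKc j i)
    have h4 : (f x j - f x i) - (f x' j - f x' i) ≤ ε * Kc j i :=
      le_trans (le_trans (le_abs_self _) h2) h3
    linarith
  -- S ⊆ T
  have hST : Fk f k x ⊆ Fk f k x' := by
    intro j hj
    simp only [Fk, Finset.mem_filter, Finset.mem_univ, true_and]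
    have hsub : (Finset.univ.filter fun i => f x' j ≤ f x' i) ⊆ Fk f k x := by
      intro a ha
      simp only [Finset.mem_filter, Finset.mem_univ, true_and] at ha
      by_contra haS
      exact absurd ha (not_le.mpr (hsep j hj a haS))
    calc (Finset.univ.filter fun i => f x' j ≤ f x' i).card
        ≤ (Fk f k x).card := Finset.card_le_card hsub
      _ ≤ k := RTKAux.card_Fk_le f k x hk1 (hg x)
  -- card T ≤ card S
  have hcard : (Fk f k x').card ≤ (Fk f k x).card := by
    by_cases h : ∃ i, i ∉ Fk f k x
    · calc (Fk f k x').card ≤ k := RTKAux.card_Fk_le f k x' hk1 (hg x')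
        _ ≤ (Fk f k x).card := RTKAux.k_le_card_Fk f k x (hg x) h
    · push_neg at h
      have : Fk f k x = Finset.univ := Finset.eq_univ_of_forall h
      rw [this]
      exact Finset.card_le_univ _
  exact Finset.eq_of_subset_of_card_le hST hcard
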